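/- If the integer sequence b = (a₀,…,aᵢ+ε, ε, aᵢ₊₁+ε, aᵢ₊₂,…,aₙ) is obtained from a = (a₀,…,aₙ) by the move of type (i) with ε ∈ {1,−1}, then the modified continued fractions of a and b represent the same rational number: ⟨a₀,…,aₙ⟩ = ⟨b₀,…,bₙ₊₁⟩. -/

import Mathlib

/-- The pair `(Q⁽ⁿ⁾, P⁽ⁿ⁾)` of Manin's recursion, evaluated on a list `[a₀,…,aₙ]` of
integers: `QP [] = (1,0)` and `QP (a₀ :: l) = (a₀ * Q(l) - P(l), Q(l))`, so `QP [a] = (a,1)`.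
The modified continued fraction `⟨a₀,…,aₙ⟩`, as an element of `ℚ ∪ {∞} = P¹(ℚ)`, is the
point with homogeneous coordinates `(Q(l), P(l))`; since these coordinates are coprime
(hence not both zero), two lists represent the same point of `ℚ ∪ {∞}` if and only if the
cross-multiplication identity `Q(l₁)·P(l₂) = Q(l₂)·P(l₁)` holds. -/
def QP : List ℤ → ℤ × ℤ
  | [] => (1, 0)
  | a :: l => (a * (QP l).1 - (QP l).2, (QP l).1)

lemma QP_append_smul (x : List ℤ) (l l' : List ℤ) (c : ℤ)
    (h1 : (QP l').1 = c * (QP l).1) (h2 : (QP l').2 = c * (QP l).2) :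
    (QP (x ++ l')).1 = c * (QP (x ++ l)).1 ∧ (QP (x ++ l')).2 = c * (QP (x ++ l)).2 := by
  induction x with
  | nil => exact ⟨h1, h2⟩
  | cons a t ih =>
    simp only [List.cons_append, QP, List.append_eq, ih.1, ih.2]
    exact ⟨by ring, trivial⟩

/-- Move of type (i): replacing the consecutive entries `(aᵢ, aᵢ₊₁)` of a sequence by
`(aᵢ+ε, ε, aᵢ₊₁+ε)` with `ε = ±1` does not change the rational number (element of
`ℚ ∪ {∞}`) represented by the modified continued fraction. -/
theorem move_one (x y : List ℤ) (u v ε : ℤ) (hε : ε = 1 ∨ ε = -1) :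
    (QP (x ++ [u, v] ++ y)).1 * (QP (x ++ [u + ε, ε, v + ε] ++ y)).2 =
      (QP (x ++ [u + ε, ε, v + ε] ++ y)).1 * (QP (x ++ [u, v] ++ y)).2 := by
  have hsq : ε * ε = 1 := by rcases hε with h | h <;> simp [h]
  have h1 : (QP ((u+ε) :: ε :: (v+ε) :: y)).1 = ε * (QP (u :: v :: y)).1 := by
    simp only [QP]
    linear_combination ((u + v + ε) * (QP y).1 - (QP y).2) * hsq
  have h2 : (QP ((u+ε) :: ε :: (v+ε) :: y)).2 = ε * (QP (u :: v :: y)).2 := by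
    simp only [QP]
    linear_combination (QP y).1 * hsq
  obtain ⟨H1, H2⟩ := QP_append_smul x (u :: v :: y) ((u+ε) :: ε :: (v+ε) :: y) ε h1 h2
  have e1 : x ++ [u, v] ++ y = x ++ (u :: v :: y) := by simp
  have e2 : x ++ [u + ε, ε, v + ε] ++ y = x ++ ((u+ε) :: ε :: (v+ε) :: y) := by simp
  rw [e1, e2, H1, H2]; ring
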